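/- Let A = {A_1, …, A_n} be a boundary in a finite-dimensional real normed space X, let d = (d_1, …, d_n) be a solution vector for A, and set K_d^Conv = ⋂_{i=1}^n B_{d_i}(conv(A_i)). Then d_H(conv(A_i), K_d^Conv) ≤ d_i for every i. -/

import Mathlib

open Metric Set

/-- `steinerSum A K = ∑ i, d_H(A_i, K)` — the functional from the Fermat–Steiner problem. -/
noncomputable def steinerSum {X : Type*} [PseudoMetricSpace X] {n : ℕ}
    (A : Fin n → Set X) (K : Set X) : ℝ :=
  ∑ i, Metric.hausdorffDist (A i) K

/-- A Steiner compact for the boundary `A`: a nonempty compact set minimizing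
`steinerSum A` over nonempty compact sets. -/
def IsSteinerCompact {X : Type*} [PseudoMetricSpace X] {n : ℕ}
    (A : Fin n → Set X) (K : Set X) : Prop :=
  K.Nonempty ∧ IsCompact K ∧
    ∀ K' : Set X, K'.Nonempty → IsCompact K' → steinerSum A K ≤ steinerSum A K'

/-- `d` is a solution vector for the boundary `A`: `d i = d_H(A_i, K)` for
some Steiner compact `K`. -/
def IsSolutionVector {X : Type*} [PseudoMetricSpace X] {n : ℕ}
    (A : Fin n → Set X) (d : Fin n → ℝ) : Prop :=
  ∃ K : Set X, IsSteinerCompact A K ∧ ∀ i, d i = Metric.hausdorffDist (A i) K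

theorem stmt6 {X : Type*} [NormedAddCommGroup X] [NormedSpace ℝ X] [FiniteDimensional ℝ X]
    (n : ℕ) (A : Fin n → Set X) (hA : ∀ i, (A i).Nonempty ∧ IsCompact (A i))
    (d : Fin n → ℝ) (hd : IsSolutionVector A d)
    (KdConv : Set X) (hKdConv : KdConv = ⋂ i, cthickening (d i) (convexHull ℝ (A i))) :
    ∀ i, Metric.hausdorffDist (convexHull ℝ (A i)) KdConv ≤ d i := by
  obtain ⟨K, ⟨hKne, hKc, -⟩, hdK⟩ := hd
  have hdnn : ∀ i, 0 ≤ d i := fun i => (hdK i) ▸ hausdorffDist_nonneg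
  have hEtop : ∀ i, EMetric.hausdorffEdist (A i) K ≠ ⊤ := fun i =>
    hausdorffEdist_ne_top_of_nonempty_of_bounded (hA i).1 hKne
      (hA i).2.isBounded hKc.isBounded
  -- K ⊆ KdConv
  have hKsub : K ⊆ KdConv := by
    rw [hKdConv]
    refine subset_iInter fun j x hx => ?_
    have h1 : infDist x (A j) ≤ d j := by
      rw [hdK j, hausdorffDist_comm]
      exact infDist_le_hausdorffDist_of_mem hx
        (by rw [EMetric.hausdorffEdist_comm]; exact hEtop j)
    have h2 : infDist x (convexHull ℝ (A j)) ≤ d j :=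
      le_trans (infDist_le_infDist_of_subset (subset_convexHull ℝ _) (hA j).1) h1
    have hne := (hA j).1.mono (subset_convexHull ℝ (A j))
    exact mem_cthickening_iff.2 (by
      calc EMetric.infEdist x (convexHull ℝ (A j))
            = ENNReal.ofReal (infDist x (convexHull ℝ (A j))) := by
              rw [infDist, ENNReal.ofReal_toReal (infEdist_ne_top hne)]; rfl
        _ ≤ ENNReal.ofReal (d j) := ENNReal.ofReal_le_ofReal h2)
  have hKdne : KdConv.Nonempty := hKne.mono hKsub
  -- KdConv convex
  have hconv : Convex ℝ KdConv := by
    rw [hKdConv]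
    exact convex_iInter fun j => (convex_convexHull ℝ (A j)).cthickening _
  intro i
  -- conv (A i) ⊆ cthickening (d i) KdConv
  have hAsub : convexHull ℝ (A i) ⊆ cthickening (d i) KdConv := by
    refine convexHull_min (fun x hx => ?_) (hconv.cthickening _)
    have h1 : infDist x K ≤ d i := by
      rw [hdK i]; exact infDist_le_hausdorffDist_of_mem hx (hEtop i)
    have h2 : infDist x KdConv ≤ d i :=
      le_trans (infDist_le_infDist_of_subset hKsub hKne) h1
    exact mem_cthickening_iff.2 (by
      calc EMetric.infEdist x KdConv = ENNReal.ofReal (infDist x KdConv) := by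
              rw [infDist, ENNReal.ofReal_toReal (infEdist_ne_top hKdne)]; rfl
        _ ≤ ENNReal.ofReal (d i) := ENNReal.ofReal_le_ofReal h2)
  refine hausdorffDist_le_of_infDist (hdnn i) (fun x hx => ?_) (fun x hx => ?_)
  · have := hAsub hx
    rw [mem_cthickening_iff] at this
    calc infDist x KdConv = (EMetric.infEdist x KdConv).toReal := rfl
      _ ≤ d i := ENNReal.toReal_le_of_le_ofReal (hdnn i) this
  · rw [hKdConv] at hx
    have := mem_iInter.1 hx i
    rw [mem_cthickening_iff] at this
    calc infDist x (convexHull ℝ (A i)) = (EMetric.infEdist x (convexHull ℝ (A i))).toReal := rfl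
      _ ≤ d i := ENNReal.toReal_le_of_le_ofReal (hdnn i) this
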